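/- A weighted graph G = (V,E,ω) admits a minres-constrained two-dimensional book-embedding if and only if G admits a 1-page book-embedding L such that, for each edge e ∈ E, ω(e) ≥ β_L(e) + 1, where β_L(e) is the burden of e in L. -/

import Mathlib

namespace Schematic

/-- A 1-page book-embedding of `G`: vertices are linearly ordered via an injective
real-valued placement `f`, and no two edges cross. -/
def IsBE {V : Type*} (G : SimpleGraph V) (f : V → ℝ) : Prop :=
  Function.Injective f ∧
  ∀ a b c d : V, G.Adj a b → G.Adj c d → ¬ (f a < f c ∧ f c < f b ∧ f b < f d)

/-- Edge `(u,v)` wraps around edge `(w,z)` (equivalently, `(w,z)` is nested into `(u,v)`),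
where `(w,z)` is written in increasing order. -/
def Wraps {V : Type*} (G : SimpleGraph V) (f : V → ℝ) (u v w z : V) : Prop :=
  G.Adj u v ∧ G.Adj w z ∧ s(u, v) ≠ s(w, z) ∧
  f u ≤ f w ∧ f w < f z ∧ f z ≤ f v

/-- A two-dimensional book-embedding of a weighted graph: a supporting 1-page
book-embedding given by the x-coordinates `x`, and for each edge `(u,v)` with `u ≺ v`
a rectangle `[x u, x v] × [ylo u v, yhi u v]` with `ylo u v ≥ 0`, area equal to the
weight of the edge, and `ylo u v` equal to the maximum of `yhi` over the edges nested
into `(u,v)` (`0` if there is no such edge). -/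
def IsTwoDimBE {V : Type*} (G : SimpleGraph V) (ω : V → V → ℝ)
    (x : V → ℝ) (ylo yhi : V → V → ℝ) : Prop :=
  IsBE G x ∧
  (∀ u v : V, ylo u v = ylo v u) ∧
  (∀ u v : V, yhi u v = yhi v u) ∧
  (∀ u v : V, G.Adj u v → 0 ≤ ylo u v) ∧
  (∀ u v : V, G.Adj u v → x u < x v →
    (x v - x u) * (yhi u v - ylo u v) = ω u v) ∧
  (∀ u v : V, G.Adj u v → x u < x v →
    (∀ w z : V, Wraps G x u v w z → yhi w z ≤ ylo u v) ∧
    ((∃ w z : V, Wraps G x u v w z ∧ ylo u v = yhi w z) ∨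
     ((¬ ∃ w z : V, Wraps G x u v w z) ∧ ylo u v = 0)))

open Classical in
/-- The burden of an edge `(u,v)` with `u ≺ v`: the number of vertices strictly
between `u` and `v`. -/
noncomputable def burden {V : Type*} [Fintype V] (f : V → ℝ) (u v : V) : ℕ :=
  (Finset.univ.filter fun w : V => f u < f w ∧ f w < f v).card

/-- A minres-supporting book-embedding: a 1-page book-embedding in which the weight of
every edge is at least its burden plus one. -/
def IsMinresBE {V : Type*} [Fintype V] (G : SimpleGraph V) (ω : V → V → ℝ)
    (f : V → ℝ) : Prop :=
  IsBE G f ∧ ∀ u v : V, G.Adj u v → f u < f v → (burden f u v : ℝ) + 1 ≤ ω u v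


noncomputable def maxZ {α : Type*} (s : Finset α) (f : α → ℝ) : ℝ :=
  (insert (0:ℝ) (s.image f)).max' (Finset.insert_nonempty _ _)

lemma le_maxZ {α : Type*} {s : Finset α} {f : α → ℝ} {a : α} (h : a ∈ s) :
    f a ≤ maxZ s f :=
  Finset.le_max' _ _ (Finset.mem_insert_of_mem (Finset.mem_image_of_mem f h))

lemma maxZ_nonneg {α : Type*} (s : Finset α) (f : α → ℝ) : 0 ≤ maxZ s f :=
  Finset.le_max' _ _ (Finset.mem_insert_self _ _)

lemma maxZ_cases {α : Type*} (s : Finset α) (f : α → ℝ) :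
    maxZ s f = 0 ∨ ∃ a ∈ s, maxZ s f = f a := by
  have := Finset.max'_mem (insert (0:ℝ) (s.image f)) (Finset.insert_nonempty _ _)
  rw [Finset.mem_insert] at this
  rcases this with h | h
  · exact Or.inl h
  · rcases Finset.mem_image.mp h with ⟨a, ha, hfa⟩
    exact Or.inr ⟨a, ha, hfa.symm⟩

open Classical in
noncomputable def rank {V : Type*} [Fintype V] (f : V → ℝ) (v : V) : ℕ :=
  (Finset.univ.filter fun w : V => f w < f v).card

open Classical in
lemma rank_add (V : Type*) [Fintype V] (f : V → ℝ) (hf : Function.Injective f)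
    {u v : V} (h : f u < f v) :
    rank f v = rank f u + 1 + burden f u v := by
  classical
  unfold rank burden
  have : (Finset.univ.filter fun w : V => f w < f v) =
      (Finset.univ.filter fun w : V => f w < f u) ∪ ({u} ∪
        Finset.univ.filter fun w : V => f u < f w ∧ f w < f v) := by
    ext w
    simp only [Finset.mem_filter, Finset.mem_univ, true_and, Finset.mem_union,
      Finset.mem_singleton]
    constructor
    · intro hw
      rcases lt_trichotomy (f w) (f u) with h1 | h1 | h1
      · exact Or.inl h1
      · exact Or.inr (Or.inl (hf h1))
      · exact Or.inr (Or.inr ⟨h1, hw⟩)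
    · rintro (h1 | rfl | ⟨h1, h2⟩)
      · exact h1.trans h
      · exact h
      · exact h2
  rw [this, Finset.card_union_of_disjoint, Finset.card_union_of_disjoint]
  · simp [add_assoc]
  · simp only [Finset.disjoint_singleton_left, Finset.mem_filter]
    intro hmem; exact absurd hmem.2.1 (lt_irrefl _)
  · rw [Finset.disjoint_union_right]
    constructor
    · simp only [Finset.disjoint_singleton_right, Finset.mem_filter]
      intro hmem; exact absurd hmem.2 (lt_irrefl _)
    · rw [Finset.disjoint_filter]
      intro w _ hw; exact fun hc => absurd (hc.1.trans hw) (lt_irrefl _)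

lemma rank_lt_iff {V : Type*} [Fintype V] (f : V → ℝ) (hf : Function.Injective f)
    {u v : V} : rank f u < rank f v ↔ f u < f v := by
  classical
  constructor
  · intro h
    by_contra hc
    push_neg at hc
    rcases hc.lt_or_eq with h1 | h1
    · have := rank_add V f hf h1
      omega
    · exact absurd (congrArg (rank f) (hf h1.symm)) h.ne
  · intro h
    have := rank_add V f hf h
    omega

lemma rank_inj {V : Type*} [Fintype V] (f : V → ℝ) (hf : Function.Injective f) :
    Function.Injective (rank f) := by
  intro u v h
  by_contra hne
  rcases (hf.ne hne).lt_or_gt with h1 | h1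
  · exact absurd h ((rank_lt_iff f hf).mpr h1).ne
  · exact absurd h.symm ((rank_lt_iff f hf).mpr h1).ne


open Classical in
noncomputable def wrapsSet {V : Type*} [Fintype V] (G : SimpleGraph V)
    (r : V → ℕ) (u v : V) : Finset (V × V) :=
  Finset.univ.filter fun p : V × V =>
    G.Adj p.1 p.2 ∧ s(u, v) ≠ s(p.1, p.2) ∧ r u ≤ r p.1 ∧ r p.1 < r p.2 ∧ r p.2 ≤ r v

lemma wrapsSet_dec {V : Type*} [Fintype V] {G : SimpleGraph V}
    {r : V → ℕ} (hr : Function.Injective r) {u v : V} {p : V × V}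
    (hp : p ∈ wrapsSet G r u v) : r p.2 - r p.1 < r v - r u := by
  classical
  simp only [wrapsSet, Finset.mem_filter, Finset.mem_univ, true_and] at hp
  obtain ⟨-, hne, h1, h2, h3⟩ := hp
  by_contra hc
  have e1 : r p.1 = r u := by omega
  have e2 : r p.2 = r v := by omega
  exact hne (by rw [hr e1.symm, hr e2.symm])

noncomputable def Yhi {V : Type*} [Fintype V] (G : SimpleGraph V) (ω : V → V → ℝ)
    (r : V → ℕ) (hr : Function.Injective r) (u v : V) : ℝ :=
  maxZ (wrapsSet G r u v).attach (fun p => Yhi G ω r hr p.1.1 p.1.2)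
    + ω u v / ((r v : ℝ) - (r u : ℝ))
termination_by r v - r u
decreasing_by exact wrapsSet_dec hr p.2

noncomputable def Ylo {V : Type*} [Fintype V] (G : SimpleGraph V) (ω : V → V → ℝ)
    (r : V → ℕ) (hr : Function.Injective r) (u v : V) : ℝ :=
  maxZ (wrapsSet G r u v).attach (fun p => Yhi G ω r hr p.1.1 p.1.2)

lemma Yhi_eq {V : Type*} [Fintype V] (G : SimpleGraph V) (ω : V → V → ℝ)
    (r : V → ℕ) (hr : Function.Injective r) (u v : V) :
    Yhi G ω r hr u v = Ylo G ω r hr u v + ω u v / ((r v : ℝ) - (r u : ℝ)) := by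
  rw [Yhi, Ylo]

attribute [irreducible] Ylo

lemma Ylo_nonneg {V : Type*} [Fintype V] (G : SimpleGraph V) (ω : V → V → ℝ)
    (r : V → ℕ) (hr : Function.Injective r) (u v : V) :
    0 ≤ Ylo G ω r hr u v := by rw [Ylo]; exact maxZ_nonneg _ _

lemma Yhi_pos {V : Type*} [Fintype V] {G : SimpleGraph V} {ω : V → V → ℝ}
    {r : V → ℕ} (hr : Function.Injective r)
    (hpos : ∀ u v, G.Adj u v → 0 < ω u v) {u v : V}
    (hadj : G.Adj u v) (hlt : r u < r v) : 0 < Yhi G ω r hr u v := by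
  rw [Yhi_eq]
  have h1 : (0:ℝ) < (r v : ℝ) - (r u : ℝ) := by
    have : (r u : ℝ) < r v := by exact_mod_cast hlt
    linarith
  have := div_pos (hpos u v hadj) h1
  have := Ylo_nonneg G ω r hr u v
  linarith

lemma le_Ylo {V : Type*} [Fintype V] {G : SimpleGraph V} {ω : V → V → ℝ}
    {r : V → ℕ} (hr : Function.Injective r) {u v w z : V}
    (h : (w, z) ∈ wrapsSet G r u v) :
    Yhi G ω r hr w z ≤ Ylo G ω r hr u v := by
  rw [Ylo]
  exact le_maxZ (s := (wrapsSet G r u v).attach)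
    (f := fun p => Yhi G ω r hr p.1.1 p.1.2) (a := ⟨(w, z), h⟩)
    (Finset.mem_attach _ _)


lemma Ylo_cases {V : Type*} [Fintype V] (G : SimpleGraph V) (ω : V → V → ℝ)
    (r : V → ℕ) (hr : Function.Injective r) (u v : V) :
    Ylo G ω r hr u v = 0 ∨
      ∃ w z : V, (w, z) ∈ wrapsSet G r u v ∧
        Ylo G ω r hr u v = Yhi G ω r hr w z := by
  rw [Ylo]
  rcases maxZ_cases (wrapsSet G r u v).attach
      (fun p => Yhi G ω r hr p.1.1 p.1.2) with h | ⟨a, -, ha⟩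
  · exact Or.inl h
  · exact Or.inr ⟨a.1.1, a.1.2, by simpa using a.2, ha⟩

open Classical in
lemma packing {V : Type*} [Fintype V] (x : V → ℝ) {u v : V}
    (h1 : 1 ≤ x v - x u)
    (hsep : ∀ a b : V, a ≠ b → 1 ≤ |x a - x b|) :
    (burden x u v : ℝ) + 1 ≤ x v - x u := by
  classical
  set S : Finset V := Finset.univ.filter (fun w : V => x u < x w ∧ x w < x v) with hS
  set T : Finset V := insert u S with hT
  have hu : u ∉ S := by simp [hS]
  have cardT : T.card = burden x u v + 1 := by
    rw [hT, Finset.card_insert_of_notMem hu]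
    rfl
  set m : ℤ := ⌊x v - 1 - x u⌋ with hm
  have hm0 : 0 ≤ m := Int.floor_nonneg.mpr (by linarith)
  set g : V → ℤ := fun w => ⌊x w - x u⌋ with hg
  have hbnd : ∀ w ∈ T, x u ≤ x w ∧ x w ≤ x v - 1 := by
    intro w hw
    rw [hT, Finset.mem_insert] at hw
    rcases hw with rfl | hw
    · exact ⟨le_refl _, by linarith⟩
    · rw [hS, Finset.mem_filter] at hw
      obtain ⟨-, h2, h3⟩ := hw
      have hne : w ≠ v := fun h => absurd h3 (by rw [h]; exact lt_irrefl _)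
      have := hsep w v hne
      have habs : |x w - x v| = -(x w - x v) := abs_of_neg (by linarith)
      rw [habs] at this
      exact ⟨le_of_lt h2, by linarith⟩
  have hmaps : ∀ w ∈ T, g w ∈ Finset.Icc (0 : ℤ) m := by
    intro w hw
    obtain ⟨hA, hB⟩ := hbnd w hw
    rw [Finset.mem_Icc]
    exact ⟨Int.floor_nonneg.mpr (by linarith), Int.floor_le_floor (by linarith)⟩
  have hkey : ∀ a b : V, x a + 1 ≤ x b → g a < g b := by
    intro a b hab
    have h2 : (⌊x a - x u⌋ : ℤ) + 1 ≤ ⌊x b - x u⌋ := by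
      have := Int.floor_le_floor (R := ℝ) (show x a - x u + 1 ≤ x b - x u by linarith)
      rwa [Int.floor_add_one] at this
    simp only [hg]
    omega
  have hinj : Set.InjOn g T := by
    intro a ha b hb hgab
    by_contra hne
    rcases le_abs.mp (hsep a b hne) with h2 | h2
    · exact absurd hgab.symm (hkey b a (by linarith)).ne
    · exact absurd hgab (hkey a b (by linarith)).ne
  have hcard : T.card ≤ (Finset.Icc (0 : ℤ) m).card :=
    Finset.card_le_card_of_injOn g hmaps hinj
  rw [Int.card_Icc] at hcard
  have hcard2 : (T.card : ℤ) ≤ m + 1 := by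
    have := Int.toNat_of_nonneg (show (0:ℤ) ≤ m + 1 - 0 by omega)
    omega
  have hfl : (m : ℝ) ≤ x v - 1 - x u := Int.floor_le _
  have : ((T.card : ℤ) : ℝ) ≤ ((m + 1 : ℤ) : ℝ) := by exact_mod_cast hcard2
  push_cast at this
  rw [cardT] at this
  push_cast at this
  linarith


/-- a weighted graph admits a minres-constrained two-dimensional
book-embedding if and only if it admits a 1-page book-embedding in which the weight of
every edge is at least its burden plus one. -/
theorem minres_twodim_iff_minres_supporting {V : Type*} [Fintype V]
    (G : SimpleGraph V) (ω : V → V → ℝ)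
    (hsym : ∀ u v, ω u v = ω v u)
    (hpos : ∀ u v, G.Adj u v → 0 < ω u v) :
    (∃ (x : V → ℝ) (ylo yhi : V → V → ℝ),
      IsTwoDimBE G ω x ylo yhi ∧
      (∀ u v : V, G.Adj u v → x u < x v → 1 ≤ x v - x u) ∧
      (∀ u v : V, G.Adj u v → 1 ≤ yhi u v - ylo u v) ∧
      (∀ u v : V, u ≠ v → 1 ≤ |x u - x v|)) ↔
    (∃ f : V → ℝ, IsMinresBE G ω f) := by
  classical
  constructor
  · rintro ⟨x, ylo, yhi, ⟨hBE, hsl, hsh, hnn, harea, hmax⟩, hx1, hy1, hsep⟩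
    refine ⟨x, hBE, ?_⟩
    intro u v hadj hlt
    have hb := packing x (hx1 u v hadj hlt) hsep
    have ha := harea u v hadj hlt
    have hy := hy1 u v hadj
    have hb0 : (0:ℝ) ≤ (burden x u v : ℝ) := Nat.cast_nonneg _
    nlinarith [mul_nonneg (show (0:ℝ) ≤ x v - x u by linarith)
      (show (0:ℝ) ≤ yhi u v - ylo u v - 1 by linarith)]
  · rintro ⟨f, hfBE, hmin⟩
    have hfinj : Function.Injective f := hfBE.1
    set r : V → ℕ := rank f with hr
    have hrinj : Function.Injective r := rank_inj f hfinj
    set x : V → ℝ := fun v => (r v : ℝ) with hx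
    have hxlt : ∀ a b : V, x a < x b ↔ f a < f b := by
      intro a b
      simp only [hx, Nat.cast_lt]
      exact rank_lt_iff f hfinj
    have hxrlt : ∀ a b : V, x a < x b ↔ r a < r b := by
      intro a b; simp only [hx, Nat.cast_lt]
    have hxinj : Function.Injective x := by
      intro a b hab
      simp only [hx] at hab
      exact hrinj (Nat.cast_injective hab)
    have hxBE : IsBE G x := by
      refine ⟨hxinj, ?_⟩
      intro a b c d hab hcd hc
      exact hfBE.2 a b c d hab hcd
        ⟨(hxlt _ _).mp hc.1, (hxlt _ _).mp hc.2.1, (hxlt _ _).mp hc.2.2⟩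
    have hwidth : ∀ a b : V, G.Adj a b → r a < r b →
        ((r b : ℝ) - (r a : ℝ) = (burden f a b : ℝ) + 1) ∧
        ((burden f a b : ℝ) + 1 ≤ ω a b) := by
      intro a b hab hlt
      have hf : f a < f b := (rank_lt_iff f hfinj).mp hlt
      have hra := rank_add V f hfinj hf
      constructor
      · rw [hr] at *
        rw [hra]; push_cast; ring
      · exact hmin a b hab hf
    set ylo : V → V → ℝ := fun a b =>
      if r a < r b then Ylo G ω r hrinj a b else Ylo G ω r hrinj b a with hylo
    set yhi : V → V → ℝ := fun a b =>
      if r a < r b then Yhi G ω r hrinj a b else Yhi G ω r hrinj b a with hyhi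
    have hifsym : ∀ (F : V → V → ℝ) (a b : V),
        (if r a < r b then F a b else F b a) =
        (if r b < r a then F b a else F a b) := by
      intro F a b
      rcases lt_trichotomy (r a) (r b) with h | h | h
      · rw [if_pos h, if_neg (asymm h)]
      · have : a = b := hrinj h
        subst this; simp
      · rw [if_neg (asymm h), if_pos h]
    have hWiff : ∀ a b : V, G.Adj a b → ∀ w z : V,
        Wraps G x a b w z ↔ (w, z) ∈ wrapsSet G r a b := by
      intro a b hab w z
      unfold Wraps wrapsSet
      simp only [Finset.mem_filter, Finset.mem_univ, true_and, hx, Nat.cast_le,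
        Nat.cast_lt]
      exact ⟨fun h => h.2, fun h => ⟨hab, h⟩⟩
    have hkey : ∀ a b : V, G.Adj a b → r a < r b →
        1 ≤ Yhi G ω r hrinj a b - Ylo G ω r hrinj a b := by
      intro a b hab hlt
      obtain ⟨hw1, hw2⟩ := hwidth a b hab hlt
      rw [Yhi_eq]
      have hb0 : (0:ℝ) ≤ (burden f a b : ℝ) := Nat.cast_nonneg _
      have hd : (0:ℝ) < (r b : ℝ) - (r a : ℝ) := by rw [hw1]; linarith
      have h1 : 1 ≤ ω a b / ((r b : ℝ) - (r a : ℝ)) := by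
        rw [le_div_iff₀ hd, one_mul, hw1]
        linarith
      linarith
    refine ⟨x, ylo, yhi, ⟨hxBE, ?_, ?_, ?_, ?_, ?_⟩, ?_, ?_, ?_⟩
    · intro a b
      simp only [hylo]
      exact hifsym _ a b
    · intro a b
      simp only [hyhi]
      exact hifsym _ a b
    · intro a b hab
      simp only [hylo]
      split
      · exact Ylo_nonneg G ω r hrinj a b
      · exact Ylo_nonneg G ω r hrinj b a
    · intro a b hab hxab
      have hlt : r a < r b := (hxrlt a b).mp hxab
      obtain ⟨hw1, hw2⟩ := hwidth a b hab hlt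
      have hb0 : (0:ℝ) ≤ (burden f a b : ℝ) := Nat.cast_nonneg _
      have hd : ((r b : ℝ) - (r a : ℝ)) ≠ 0 := by rw [hw1]; linarith
      simp only [hylo, hyhi, hx, if_pos hlt]
      rw [Yhi_eq]
      field_simp
      ring
    · intro a b hab hxab
      have hlt : r a < r b := (hxrlt a b).mp hxab
      constructor
      · intro w z hw
        have hmem := (hWiff a b hab w z).mp hw
        have hmem' := hmem
        simp only [wrapsSet, Finset.mem_filter, Finset.mem_univ, true_and] at hmem'
        simp only [hylo, hyhi, if_pos hlt, if_pos hmem'.2.2.2.1]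
        exact le_Ylo hrinj hmem
      · rcases Ylo_cases G ω r hrinj a b with h0 | ⟨w, z, hmem, heq⟩
        · right
          constructor
          · rintro ⟨w, z, hw⟩
            have hmem := (hWiff a b hab w z).mp hw
            have hmem' := hmem
            simp only [wrapsSet, Finset.mem_filter, Finset.mem_univ, true_and] at hmem'
            have hp := Yhi_pos (G := G) (ω := ω) hrinj hpos hmem'.1 hmem'.2.2.2.1
            have hle := le_Ylo (G := G) (ω := ω) hrinj hmem
            rw [h0] at hle
            linarith
          · simp only [hylo, if_pos hlt]
            exact h0
        · left
          have hmem' := hmem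
          simp only [wrapsSet, Finset.mem_filter, Finset.mem_univ, true_and] at hmem'
          refine ⟨w, z, (hWiff a b hab w z).mpr hmem, ?_⟩
          simp only [hylo, hyhi, if_pos hlt, if_pos hmem'.2.2.2.1]
          exact heq
    · intro a b hab hxab
      have hlt : r a < r b := (hxrlt a b).mp hxab
      obtain ⟨hw1, hw2⟩ := hwidth a b hab hlt
      have hb0 : (0:ℝ) ≤ (burden f a b : ℝ) := Nat.cast_nonneg _
      simp only [hx]
      linarith
    · intro a b hab
      have hne : a ≠ b := hab.ne
      rcases lt_trichotomy (r a) (r b) with h | h | h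
      · simp only [hylo, hyhi, if_pos h]
        exact hkey a b hab h
      · exact absurd (hrinj h) hne
      · simp only [hylo, hyhi, if_neg (asymm h), if_neg (asymm h)]
        exact hkey b a hab.symm h
    · intro a b hne
      have hrne : r a ≠ r b := fun h => hne (hrinj h)
      simp only [hx]
      rcases hrne.lt_or_gt with h | h
      · have : (r a : ℝ) + 1 ≤ (r b : ℝ) := by exact_mod_cast h
        rw [abs_of_neg (by linarith)]
        linarith
      · have : (r b : ℝ) + 1 ≤ (r a : ℝ) := by exact_mod_cast h
        rw [abs_of_pos (by linarith)]
        linarith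

end Schematic
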